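/- Assume (A1), (A2) and (A3). Then, almost surely, the posterior under the flat prior is proper for all sufficiently large n; that is, with probability one there exists N such that for all n ≥ N, the design matrix formed by X₁,…,X_n has full column rank and ∫_{ℝ^p} ∏_{i=1}^n Φ(X_iᵀβ)^{Y_i} (1−Φ(X_iᵀβ))^{1−Y_i} dβ < ∞. -/

import Mathlib

open MeasureTheory Matrix Set

noncomputable section

/-- standard normal pdf -/
def nphi (x : ℝ) : ℝ := (Real.sqrt (2 * Real.pi))⁻¹ * Real.exp (-(x ^ 2) / 2)

/-- standard normal cdf -/
def nPhi (x : ℝ) : ℝ := ∫ t in Set.Iic x, nphi t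

/-- membership of x in the open orthant of ℝ^p determined by the sign pattern s -/
def inOrth {p : ℕ} (s : Fin p → Bool) (x : Fin p → ℝ) : Prop :=
  ∀ k, if s k then 0 < x k else x k < 0

lemma one_le_sqrt2pi : 1 ≤ Real.sqrt (2 * Real.pi) := by
  rw [show (1:ℝ) = Real.sqrt 1 by simp]
  exact Real.sqrt_le_sqrt (by nlinarith [Real.pi_gt_three])

lemma sqrt2pi_pos : 0 < Real.sqrt (2 * Real.pi) := lt_of_lt_of_le one_pos one_le_sqrt2pi

lemma nphi_nonneg (x : ℝ) : 0 ≤ nphi x :=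
  mul_nonneg (inv_nonneg.2 (Real.sqrt_nonneg _)) (Real.exp_pos _).le

lemma nphi_integrable : Integrable nphi := by
  have h : Integrable (fun x : ℝ => Real.exp (-(1/2 : ℝ) * x ^ 2)) :=
    integrable_exp_neg_mul_sq (by norm_num)
  have := h.const_mul ((Real.sqrt (2 * Real.pi))⁻¹)
  refine this.congr (Filter.Eventually.of_forall fun x => ?_)
  rw [nphi]; ring_nf

lemma nphi_integral : ∫ x, nphi x = 1 := by
  have h : ∫ x : ℝ, Real.exp (-(1/2 : ℝ) * x ^ 2) = Real.sqrt (Real.pi / (1/2)) :=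
    integral_gaussian (1/2)
  have h2 : ∫ x, nphi x = (Real.sqrt (2 * Real.pi))⁻¹ * ∫ x : ℝ, Real.exp (-(1/2 : ℝ) * x ^ 2) := by
    rw [← integral_const_mul]
    congr 1 with x
    rw [nphi]; ring_nf
  rw [h2, h, show Real.pi / (1/2) = 2 * Real.pi by ring, inv_mul_cancel₀ sqrt2pi_pos.ne']

lemma nphi_le_gauss (t : ℝ) : nphi t ≤ Real.exp (-(t ^ 2) / 2) := by
  have := (Real.exp_pos (-(t^2)/2)).le
  calc nphi t ≤ 1 * Real.exp (-(t ^ 2) / 2) := by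
        refine mul_le_mul_of_nonneg_right ?_ this
        rw [inv_le_one_iff₀]; right; exact one_le_sqrt2pi
    _ = _ := one_mul _

lemma nPhi_nonneg (x : ℝ) : 0 ≤ nPhi x :=
  setIntegral_nonneg measurableSet_Iic fun t _ => nphi_nonneg t

lemma nPhi_le_one (x : ℝ) : nPhi x ≤ 1 := by
  rw [← nphi_integral]
  exact setIntegral_le_integral nphi_integrable (Filter.Eventually.of_forall nphi_nonneg)

lemma nPhi_mono : Monotone nPhi := fun a b hab => by
  apply setIntegral_mono_set nphi_integrable.integrableOn
    (Filter.Eventually.of_forall nphi_nonneg)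
  exact Filter.Eventually.of_forall (Iic_subset_Iic.2 hab)

lemma nPhi_measurable : Measurable nPhi := nPhi_mono.measurable

lemma nPhi_le_exp {u : ℝ} (hu : u ≤ -2) : nPhi u ≤ Real.exp u := by
  have hmono : ∀ t ∈ Iic u, nphi t ≤ Real.exp t := by
    intro t ht
    refine (nphi_le_gauss t).trans (Real.exp_le_exp.2 ?_)
    have ht' : t ≤ -2 := le_trans ht hu
    nlinarith
  calc nPhi u ≤ ∫ t in Iic u, Real.exp t := by
        refine setIntegral_mono_on nphi_integrable.integrableOn
          (integrableOn_exp_Iic u) measurableSet_Iic hmono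
    _ = Real.exp u := integral_exp_Iic u

lemma one_sub_nPhi (u : ℝ) : 1 - nPhi u = ∫ t in Ioi u, nphi t := by
  have := intervalIntegral.integral_Iic_add_Ioi (b := u) nphi_integrable.integrableOn nphi_integrable.integrableOn
  rw [nPhi]
  have h2 : ∫ t, nphi t = 1 := nphi_integral
  linarith [this, h2]

lemma one_sub_nPhi_le {u : ℝ} (hu : 2 ≤ u) : 1 - nPhi u ≤ Real.exp (-u) := by
  rw [one_sub_nPhi]
  have hmono : ∀ t ∈ Ioi u, nphi t ≤ Real.exp (-t) := by
    intro t ht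
    refine (nphi_le_gauss t).trans (Real.exp_le_exp.2 ?_)
    have ht' : 2 ≤ t := le_trans hu (le_of_lt ht)
    nlinarith
  calc (∫ t in Ioi u, nphi t) ≤ ∫ t in Ioi u, Real.exp (-t) := by
        refine setIntegral_mono_on nphi_integrable.integrableOn
          ?_ measurableSet_Ioi hmono
        exact (exp_neg_integrableOn_Ioi u one_pos).congr_fun (fun x _ => by norm_num)
          measurableSet_Ioi
    _ = Real.exp (-u) := integral_exp_neg_Ioi u

lemma integrable_exp_neg_abs : Integrable (fun x : ℝ => Real.exp (-|x|)) := by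
  have : (univ : Set ℝ) = Iic 0 ∪ Ioi 0 := (Iic_union_Ioi).symm
  rw [← integrableOn_univ, this]
  refine IntegrableOn.union ?_ ?_
  · refine (integrableOn_exp_Iic 0).congr_fun (fun x hx => ?_) measurableSet_Iic
    rw [abs_of_nonpos hx, neg_neg]
  · refine ((exp_neg_integrableOn_Ioi 0 one_pos).congr_fun (fun x hx => ?_) measurableSet_Ioi)
    rw [abs_of_pos hx]; norm_num

lemma integrable_exp_neg_mul_abs {a : ℝ} (ha : 0 < a) :
    Integrable (fun x : ℝ => Real.exp (-(a * |x|))) := by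
  have := integrable_exp_neg_abs.comp_mul_left' (R := a) ha.ne'
  refine this.congr (Filter.Eventually.of_forall fun x => ?_)
  simp [abs_mul, abs_of_pos ha]

section Det

variable {p n : ℕ}

/-- the signed value `±(xᵢ ⬝ β)` -/
def sval (x : Fin n → Fin p → ℝ) (y : Fin n → Bool) (i : Fin n) (β : Fin p → ℝ) : ℝ :=
  if y i then dotProduct (x i) β else -(dotProduct (x i) β)

lemma sval_key {x : Fin n → Fin p → ℝ} {y : Fin n → Bool}
    (h : ∀ s : Fin p → Bool, ∃ i, inOrth s (fun k => if y i then x i k else -(x i k)))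
    {β : Fin p → ℝ} (hβ : β ≠ 0) : ∃ i, sval x y i β < 0 := by
  classical
  obtain ⟨i, hi⟩ := h (fun k => decide (β k < 0))
  refine ⟨i, ?_⟩
  set z : Fin p → ℝ := fun k => if y i then x i k else -(x i k) with hz
  have hdot : sval x y i β = dotProduct z β := by
    rw [sval, hz]
    by_cases hy : y i <;> simp [hy, dotProduct, neg_mul, Finset.sum_neg_distrib]
  rw [hdot, dotProduct]
  obtain ⟨k₀, hk₀⟩ : ∃ k, β k ≠ 0 := by
    by_contra hcon
    push_neg at hcon
    exact hβ (funext hcon)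
  have hle : ∀ k ∈ Finset.univ, z k * β k ≤ (fun _ => (0:ℝ)) k := by
    intro k _
    have := hi k
    by_cases hb : β k < 0
    · simp only [hb, decide_eq_true_eq, if_true] at this
      exact le_of_lt (mul_neg_of_pos_of_neg this hb)
    · simp only [hb, decide_eq_true_eq, if_false] at this
      push_neg at hb
      exact mul_nonpos_of_nonpos_of_nonneg this.le hb
  have hlt : ∃ k ∈ Finset.univ, z k * β k < (fun _ => (0:ℝ)) k := by
    refine ⟨k₀, Finset.mem_univ _, ?_⟩
    have := hi k₀
    rcases lt_or_gt_of_ne hk₀ with hb | hb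
    · simp only [hb, decide_eq_true_eq, if_true] at this
      exact mul_neg_of_pos_of_neg this hb
    · have hb' : ¬ (β k₀ < 0) := not_lt.2 hb.le
      simp only [hb', decide_eq_true_eq, if_false] at this
      exact mul_neg_of_neg_of_pos this hb
  have := Finset.sum_lt_sum hle hlt
  simpa using this

end Det

lemma det_lemma {p n : ℕ} (hp : 1 ≤ p) (x : Fin n → Fin p → ℝ) (y : Fin n → Bool)
    (h : ∀ s : Fin p → Bool, ∃ i, inOrth s (fun k => if y i then x i k else -(x i k))) :
    (Matrix.of fun (i : Fin n) (k : Fin p) => x i k).rank = p ∧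
    Integrable (fun β : Fin p → ℝ => ∏ i : Fin n,
      if y i then nPhi (dotProduct (fun k => x i k) β)
      else 1 - nPhi (dotProduct (fun k => x i k) β)) := by
  classical
  haveI hnp : Nonempty (Fin p) := ⟨⟨0, hp⟩⟩
  haveI hnn : Nonempty (Fin n) := (h (fun _ => true)).elim fun i _ => ⟨i⟩
  -- full rank
  have hinj : Function.Injective (Matrix.of fun (i : Fin n) (k : Fin p) => x i k).mulVecLin := by
    rw [← LinearMap.ker_eq_bot, LinearMap.ker_eq_bot']
    intro β hβ0
    by_contra hβ
    obtain ⟨i, hi⟩ := sval_key h hβ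
    have : dotProduct (x i) β = 0 := by
      have := congrFun hβ0 i
      simpa [Matrix.mulVecLin_apply, Matrix.mulVec, Matrix.of_apply] using this
    rw [sval, this] at hi
    by_cases hy : y i <;> simp [hy] at hi
  have hrank : (Matrix.of fun (i : Fin n) (k : Fin p) => x i k).rank = p := by
    rw [Matrix.rank, LinearMap.finrank_range_of_inj hinj]
    simp [Module.finrank_pi]
  refine ⟨hrank, ?_⟩
  -- the factor functions
  set f : Fin n → (Fin p → ℝ) → ℝ := fun i β =>
    if y i then nPhi (dotProduct (fun k => x i k) β)
    else 1 - nPhi (dotProduct (fun k => x i k) β) with hf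
  have hf_nonneg : ∀ i β, 0 ≤ f i β := by
    intro i β
    by_cases hy : y i <;>
      simp [hf, hy, nPhi_nonneg, sub_nonneg, nPhi_le_one]
  have hf_le_one : ∀ i β, f i β ≤ 1 := by
    intro i β
    by_cases hy : y i <;>
      simp [hf, hy, nPhi_le_one, sub_le_self_iff, nPhi_nonneg]
  have hf_exp : ∀ i β, sval x y i β ≤ -2 → f i β ≤ Real.exp (sval x y i β) := by
    intro i β hs
    by_cases hy : y i
    · rw [hf]; simp only [hy, if_true]
      rw [sval, if_pos hy] at hs ⊢
      exact nPhi_le_exp hs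
    · rw [hf]; simp only [hy, if_false]
      rw [sval, if_neg hy] at hs ⊢
      have h2 : 2 ≤ dotProduct (x i) β := by linarith
      exact one_sub_nPhi_le h2
  -- compactness: uniform δ
  have hcont : ∀ i, Continuous (fun β => sval x y i β) := by
    intro i
    have hdc : Continuous (fun β : Fin p → ℝ => dotProduct (x i) β) := by
      simp only [dotProduct]
      exact continuous_finset_sum _ fun k _ => continuous_const.mul (continuous_apply k)
    by_cases hy : y i
    · simpa [sval, hy] using hdc
    · simp only [sval, hy, Bool.false_eq_true, if_false]
      exact hdc.neg
  have hSne : (Metric.sphere (0 : Fin p → ℝ) 1).Nonempty := by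
    haveI : Nontrivial (Fin p → ℝ) := Function.nontrivial
    exact NormedSpace.sphere_nonempty.2 zero_le_one
  set F : (Fin p → ℝ) → ℝ := fun β => Finset.univ.inf' Finset.univ_nonempty
      (fun i => sval x y i β) with hF
  have hFcont : Continuous F := by
    rw [hF]
    exact Continuous.finset_inf'_apply Finset.univ_nonempty fun i _ => hcont i
  obtain ⟨β₀, hβ₀S, hmax'⟩ := (isCompact_sphere (0 : Fin p → ℝ) 1).exists_isMaxOn hSne
    hFcont.continuousOn
  have hmax : ∀ u ∈ Metric.sphere (0 : Fin p → ℝ) 1, F u ≤ F β₀ := fun u hu => hmax' hu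
  have hβ₀ne : β₀ ≠ 0 := by
    intro hcon
    have := mem_sphere_zero_iff_norm.1 hβ₀S
    rw [hcon] at this; simp at this
  set δ : ℝ := -F β₀ with hδdef
  have hδpos : 0 < δ := by
    obtain ⟨i, hi⟩ := sval_key h hβ₀ne
    have : F β₀ ≤ sval x y i β₀ := Finset.inf'_le _ (Finset.mem_univ i)
    rw [hδdef]; linarith
  have huniform : ∀ β : Fin p → ℝ, ∃ i, sval x y i β ≤ -(δ * ‖β‖) := by
    intro β
    by_cases hβ : β = 0
    · refine ⟨Classical.arbitrary _, ?_⟩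
      rw [hβ]
      by_cases hy : y (Classical.arbitrary (Fin n)) <;> simp [sval, hy]
    · set c : ℝ := ‖β‖ with hc
      have hcpos : 0 < c := norm_pos_iff.2 hβ
      set u : Fin p → ℝ := c⁻¹ • β with hu
      have huS : u ∈ Metric.sphere (0 : Fin p → ℝ) 1 := by
        rw [mem_sphere_zero_iff_norm, hu, norm_smul]
        simp [abs_of_pos (inv_pos.2 hcpos), hc, inv_mul_cancel₀ hcpos.ne']
        exact inv_mul_cancel₀ hcpos.ne'
      obtain ⟨i, hi⟩ := Finset.exists_mem_eq_inf' Finset.univ_nonempty (fun i => sval x y i u)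
      refine ⟨i, ?_⟩
      have h1 : sval x y i u ≤ -δ := by
        have hle := hmax u huS
        have heq : F u = sval x y i u := hi.2
        rw [hδdef, ← heq, neg_neg]
        exact hle
      have hscale : sval x y i β = c * sval x y i u := by
        have hβeq : β = c • u := by
          rw [hu, smul_smul, mul_inv_cancel₀ hcpos.ne', one_smul]
        rw [sval, sval]
        conv_lhs => rw [hβeq]
        have hdots : dotProduct (x i) (c • u) = c * dotProduct (x i) u := by
          simp [dotProduct, Finset.mul_sum]
          congr 1 with k
          ring
        by_cases hy : y i <;> simp [hy, hdots] <;> ring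
      rw [hscale]
      calc c * sval x y i u ≤ c * (-δ) := by
            exact mul_le_mul_of_nonneg_left h1 hcpos.le
        _ = -(δ * ‖β‖) := by rw [hc]; ring
  -- product bound by a single factor
  have hprod_le_single : ∀ (β : Fin p → ℝ) (i₀ : Fin n), (∏ i, f i β) ≤ f i₀ β := by
    intro β i₀
    rw [← Finset.mul_prod_erase Finset.univ (fun i => f i β) (Finset.mem_univ i₀)]
    calc f i₀ β * ∏ i ∈ Finset.univ.erase i₀, f i β
        ≤ f i₀ β * 1 := by
          refine mul_le_mul_of_nonneg_left ?_ (hf_nonneg i₀ β)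
          exact Finset.prod_le_one (fun i _ => hf_nonneg i β) (fun i _ => hf_le_one i β)
      _ = f i₀ β := mul_one _
  have hprod_le_one : ∀ β : Fin p → ℝ, (∏ i, f i β) ≤ 1 :=
    fun β => Finset.prod_le_one (fun i _ => hf_nonneg i β) (fun i _ => hf_le_one i β)
  -- global exponential bound
  have hglobal : ∀ β : Fin p → ℝ, (∏ i, f i β) ≤ Real.exp 2 * Real.exp (-(δ * ‖β‖)) := by
    intro β
    rcases le_or_gt (δ * ‖β‖) 2 with hsmall | hlarge
    · calc (∏ i, f i β) ≤ 1 := hprod_le_one β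
        _ ≤ Real.exp (2 - δ * ‖β‖) := by
            rw [show (1:ℝ) = Real.exp 0 by simp]
            exact Real.exp_le_exp.2 (by linarith)
        _ = Real.exp 2 * Real.exp (-(δ * ‖β‖)) := by rw [← Real.exp_add]; ring_nf
    · obtain ⟨i, hi⟩ := huniform β
      have h2 : sval x y i β ≤ -2 := le_trans hi (by linarith)
      calc (∏ i, f i β) ≤ f i β := hprod_le_single β i
        _ ≤ Real.exp (sval x y i β) := hf_exp i β h2
        _ ≤ Real.exp (-(δ * ‖β‖)) := Real.exp_le_exp.2 hi
        _ ≤ Real.exp 2 * Real.exp (-(δ * ‖β‖)) := by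
            nlinarith [Real.one_le_exp (by norm_num : (0:ℝ) ≤ 2), Real.exp_pos (-(δ * ‖β‖))]
  -- the dominating integrable function
  have hppos : (0:ℝ) < p := by exact_mod_cast hp
  have hδp : 0 < δ / p := div_pos hδpos hppos
  set g : (Fin p → ℝ) → ℝ := fun β => Real.exp 2 * ∏ k : Fin p, Real.exp (-(δ/p * |β k|))
    with hg
  have hg_int : Integrable g := by
    have h1 : Integrable (fun β : Fin p → ℝ => ∏ k : Fin p, Real.exp (-(δ/p * |β k|))) :=
      Integrable.fintype_prod (f := fun _ : Fin p => fun t : ℝ => Real.exp (-(δ/p * |t|)))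
        (fun _ => integrable_exp_neg_mul_abs hδp)
    exact h1.const_mul _
  have hdom : ∀ β : Fin p → ℝ, Real.exp (-(δ * ‖β‖)) ≤ ∏ k : Fin p, Real.exp (-(δ/p * |β k|)) := by
    intro β
    rw [← Real.exp_sum]
    refine Real.exp_le_exp.2 ?_
    have hsum : ∑ k : Fin p, |β k| ≤ p * ‖β‖ := by
      calc ∑ k : Fin p, |β k| ≤ ∑ _k : Fin p, ‖β‖ := by
            refine Finset.sum_le_sum fun k _ => ?_
            rw [← Real.norm_eq_abs]
            exact norm_le_pi_norm β k
        _ = p * ‖β‖ := by simp [Finset.sum_const, mul_comm]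
    have : ∑ k : Fin p, -(δ/p * |β k|) = -(δ/p * ∑ k : Fin p, |β k|) := by
      simp [Finset.mul_sum]
    rw [this]
    have : δ/p * ∑ k : Fin p, |β k| ≤ δ/p * (p * ‖β‖) :=
      mul_le_mul_of_nonneg_left hsum hδp.le
    have heq : δ/p * (p * ‖β‖) = δ * ‖β‖ := by
      field_simp
    linarith
  -- measurability
  have hmeas : Measurable (fun β : Fin p → ℝ => ∏ i, f i β) := by
    refine Finset.measurable_prod _ fun i _ => ?_
    have hdotm : Measurable (fun β : Fin p → ℝ => dotProduct (fun k => x i k) β) := by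
      simp only [dotProduct]
      exact Finset.measurable_sum _ fun k _ => (measurable_pi_apply k).const_mul _
    by_cases hy : y i
    · simpa [hf, hy, Function.comp_def] using nPhi_measurable.comp hdotm
    · simpa [hf, hy] using (nPhi_measurable.comp hdotm).const_sub 1
  -- conclude
  refine Integrable.mono' hg_int hmeas.aestronglyMeasurable
    (Filter.Eventually.of_forall fun β => ?_)
  rw [Real.norm_eq_abs, abs_of_nonneg (Finset.prod_nonneg fun i _ => hf_nonneg i β)]
  calc (∏ i, f i β) ≤ Real.exp 2 * Real.exp (-(δ * ‖β‖)) := hglobal β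
    _ ≤ g β := by
        rw [hg]
        exact mul_le_mul_of_nonneg_left (hdom β) (Real.exp_pos 2).le

section Main

open ProbabilityTheory

variable {p : ℕ}

lemma inOrth_measurable (s : Fin p → Bool) : MeasurableSet {v : Fin p → ℝ | inOrth s v} := by
  have : {v : Fin p → ℝ | inOrth s v}
      = ⋂ k, (fun v : Fin p → ℝ => v k) ⁻¹' (if s k then Ioi (0:ℝ) else Iio 0) := by
    ext v
    simp only [mem_setOf_eq, inOrth, Set.mem_iInter, Set.mem_preimage]
    refine forall_congr' fun k => ?_
    by_cases hk : s k <;> simp [hk]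
  rw [this]
  refine MeasurableSet.iInter fun k => ?_
  by_cases hk : s k <;> simp only [hk, if_true, if_false] <;>
    exact (measurable_pi_apply k) (by measurability)

lemma inOrth_neg_iff (s : Fin p → Bool) (v : Fin p → ℝ) :
    inOrth s (-v) ↔ inOrth (fun k => ! s k) v := by
  refine forall_congr' fun k => ?_
  by_cases hk : s k <;> simp [hk] <;> constructor <;> intro h <;> linarith

lemma signed_measurable :
    Measurable (fun q : (Fin p → ℝ) × Bool => if q.2 then q.1 else -q.1) := by
  have hset : MeasurableSet {q : (Fin p → ℝ) × Bool | q.2 = true} :=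
    measurable_snd (measurableSet_singleton true)
  exact Measurable.ite hset measurable_fst measurable_fst.neg

end Main

section Pos

variable {p : ℕ} {Ω : Type*} [MeasurableSpace Ω]

lemma pos_part (P : Measure Ω) [IsProbabilityMeasure P]
    (X : Ω → Fin p → ℝ) (Y : Ω → Bool) (hX : Measurable X)
    (G : (Fin p → ℝ) → ℝ) (hG : Measurable G) (hGrange : ∀ x, G x ∈ Set.Ioo (0:ℝ) 1)
    (hbern : ∀ A : Set (Fin p → ℝ), MeasurableSet A →
      (P {ω | X ω ∈ A ∧ Y ω = true}).toReal = ∫ ω in {ω | X ω ∈ A}, G (X ω) ∂P)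
    (A : Set (Fin p → ℝ)) (hA : MeasurableSet A) (hDpos : 0 < P (X ⁻¹' A)) :
    0 < P {ω | X ω ∈ A ∧ Y ω = true} ∧ 0 < P {ω | X ω ∈ A ∧ Y ω = false} := by
  have hsetEq : {ω | X ω ∈ A} = X ⁻¹' A := rfl
  have hDmeas : MeasurableSet (X ⁻¹' A) := hX hA
  have hGint : Integrable (fun ω => G (X ω)) P := by
    refine Integrable.mono' (integrable_const 1) ((hG.comp hX).aestronglyMeasurable)
      (Filter.Eventually.of_forall fun ω => ?_)
    have := hGrange (X ω)
    rw [Real.norm_eq_abs, abs_of_pos this.1]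
    exact this.2.le
  have hsuppG : Function.support (fun ω => G (X ω)) = univ := by
    ext ω; simp [Function.mem_support, (hGrange (X ω)).1.ne']
  have hTpos : 0 < P {ω | X ω ∈ A ∧ Y ω = true} := by
    have hTtoReal : 0 < (P {ω | X ω ∈ A ∧ Y ω = true}).toReal := by
      rw [hbern A hA, hsetEq]
      rw [setIntegral_pos_iff_support_of_nonneg_ae
        (Filter.Eventually.of_forall fun ω => (hGrange (X ω)).1.le) hGint.integrableOn]
      rwa [hsuppG, Set.univ_inter]
    rw [pos_iff_ne_zero]
    intro hcon
    rw [hcon] at hTtoReal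
    simp at hTtoReal
  refine ⟨hTpos, ?_⟩
  rw [pos_iff_ne_zero]
  intro hcon
  have hunion : X ⁻¹' A ⊆ {ω | X ω ∈ A ∧ Y ω = true} ∪ {ω | X ω ∈ A ∧ Y ω = false} := by
    intro ω hω
    rcases Bool.eq_false_or_eq_true (Y ω) with hb | hb
    · exact Or.inl ⟨hω, hb⟩
    · exact Or.inr ⟨hω, hb⟩
  have hle : P (X ⁻¹' A) ≤ P {ω | X ω ∈ A ∧ Y ω = true} :=
    calc P (X ⁻¹' A) ≤ P ({ω | X ω ∈ A ∧ Y ω = true} ∪ {ω | X ω ∈ A ∧ Y ω = false}) :=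
          measure_mono hunion
      _ ≤ P {ω | X ω ∈ A ∧ Y ω = true} + P {ω | X ω ∈ A ∧ Y ω = false} := measure_union_le _ _
      _ = P {ω | X ω ∈ A ∧ Y ω = true} := by rw [hcon, add_zero]
  have hletr : (P (X ⁻¹' A)).toReal ≤ (P {ω | X ω ∈ A ∧ Y ω = true}).toReal :=
    ENNReal.toReal_mono (measure_ne_top _ _) hle
  -- but ∫ G < ∫ 1
  have hstrict : (P {ω | X ω ∈ A ∧ Y ω = true}).toReal < (P (X ⁻¹' A)).toReal := by
    rw [hbern A hA, hsetEq]
    have hsub : (∫ ω in X ⁻¹' A, (1:ℝ) ∂P) - ∫ ω in X ⁻¹' A, G (X ω) ∂P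
        = ∫ ω in X ⁻¹' A, (1 - G (X ω)) ∂P := (integral_sub (integrable_const 1).integrableOn
          hGint.integrableOn).symm
    have hpos2 : 0 < ∫ ω in X ⁻¹' A, (1 - G (X ω)) ∂P := by
      rw [setIntegral_pos_iff_support_of_nonneg_ae (f := fun ω => 1 - G (X ω))
        (Filter.Eventually.of_forall fun ω => by
          have := (hGrange (X ω)).2
          simp only [Pi.zero_apply]
          linarith)
        (Integrable.integrableOn (by
          have := (integrable_const (1:ℝ) (μ := P)).sub hGint
          exact this.congr (Filter.Eventually.of_forall fun ω => rfl)))]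
      have : Function.support (fun ω => 1 - G (X ω)) = univ := by
        ext ω
        simp only [Function.mem_support, mem_univ, iff_true]
        have := (hGrange (X ω)).2
        intro hcon2
        linarith
      rwa [this, Set.univ_inter]
    have hconst : (∫ ω in X ⁻¹' A, (1:ℝ) ∂P) = (P (X ⁻¹' A)).toReal := by
      rw [setIntegral_const]; simp; rfl
    linarith
  linarith

end Pos

open Classical in
/-- under (A1)-(A3), almost surely the posterior under the flat prior
is proper for all sufficiently large n: the design matrix eventually has full
column rank and the probit likelihood is integrable over ℝ^p. -/
theorem posterior_proper_eventually
    (p : ℕ) (hp : 1 ≤ p)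
    (Ω : Type*) [MeasurableSpace Ω] (P : Measure Ω) [IsProbabilityMeasure P]
    (Xs : ℕ → Ω → Fin p → ℝ) (Ys : ℕ → Ω → Bool)
    (hXmeas : ∀ i, Measurable (Xs i)) (hYmeas : ∀ i, Measurable (Ys i))
    -- (A1)
    (hindep : ProbabilityTheory.iIndepFun
      (fun i ω => (Xs i ω, Ys i ω)) P)
    (hident : ∀ i, Measure.map (fun ω => (Xs i ω, Ys i ω)) P
      = Measure.map (fun ω => (Xs 0 ω, Ys 0 ω)) P)
    (G : (Fin p → ℝ) → ℝ) (hG : Measurable G) (hGrange : ∀ x, G x ∈ Set.Ioo (0 : ℝ) 1)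
    (hbern : ∀ A : Set (Fin p → ℝ), MeasurableSet A →
      (P {ω | Xs 0 ω ∈ A ∧ Ys 0 ω = true}).toReal
        = ∫ ω in {ω | Xs 0 ω ∈ A}, G (Xs 0 ω) ∂P)
    -- (A2)
    (hint : ∀ k l, Integrable (fun ω => Xs 0 ω k * Xs 0 ω l) P)
    (hpd : (Matrix.of fun k l => ∫ ω, Xs 0 ω k * Xs 0 ω l ∂P).PosDef)
    -- (A3)
    (hA3 : ∀ (s : Fin p → Bool) (β : Fin p → ℝ), β ≠ 0 →
      0 < P {ω | ((if inOrth s (Xs 0 ω) then (1 : ℝ) else 0) +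
                  (if inOrth s (-(Xs 0 ω)) then (1 : ℝ) else 0))
                * dotProduct (Xs 0 ω) β ≠ 0}) :
    ∀ᵐ ω ∂P, ∃ N : ℕ, ∀ n ≥ N,
      (Matrix.of fun (i : Fin n) (k : Fin p) => Xs i.1 ω k).rank = p ∧
      Integrable (fun β : Fin p → ℝ =>
        ∏ i : Fin n,
          if Ys i.1 ω then nPhi (dotProduct (fun k => Xs i.1 ω k) β)
          else 1 - nPhi (dotProduct (fun k => Xs i.1 ω k) β)) := by
  classical
  set O : (Fin p → Bool) → Set (Fin p → ℝ) := fun s => {v | inOrth s v} with hO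
  set B : (Fin p → Bool) → Set ((Fin p → ℝ) × Bool) :=
    fun s => (fun q : (Fin p → ℝ) × Bool => if q.2 then q.1 else -q.1) ⁻¹' O s with hB
  have hBmeas : ∀ s, MeasurableSet (B s) := fun s => signed_measurable (inOrth_measurable s)
  have hfmeas : ∀ i, Measurable (fun ω => (Xs i ω, Ys i ω)) :=
    fun i => (hXmeas i).prodMk (hYmeas i)
  set A : (Fin p → Bool) → ℕ → Set Ω :=
    fun s i => (fun ω => (Xs i ω, Ys i ω)) ⁻¹' B s with hA
  have hAmeas : ∀ s i, MeasurableSet (A s i) := fun s i => (hfmeas i) (hBmeas s)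
  have hAeq : ∀ s i, P (A s i) = P (A s 0) := by
    intro s i
    rw [hA]
    rw [← Measure.map_apply (hfmeas i) (hBmeas s), hident i,
      Measure.map_apply (hfmeas 0) (hBmeas s)]
  -- positivity of P (A s 0)
  have hApos : ∀ s, 0 < P (A s 0) := by
    intro s
    have hβ : (fun _ : Fin p => (1:ℝ)) ≠ 0 := by
      intro hcon
      have := congrFun hcon ⟨0, hp⟩
      norm_num at this
    have hE := hA3 s (fun _ => 1) hβ
    have hsubE : {ω | ((if inOrth s (Xs 0 ω) then (1 : ℝ) else 0) +
                  (if inOrth s (-(Xs 0 ω)) then (1 : ℝ) else 0))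
                * dotProduct (Xs 0 ω) (fun _ => 1) ≠ 0}
        ⊆ (Xs 0 ⁻¹' O s) ∪ (Xs 0 ⁻¹' O (fun k => ! s k)) := by
      intro ω hω
      simp only [mem_setOf_eq, mul_ne_zero_iff] at hω
      by_cases h1 : inOrth s (Xs 0 ω)
      · exact Or.inl h1
      · by_cases h2 : inOrth s (-(Xs 0 ω))
        · exact Or.inr ((inOrth_neg_iff s (Xs 0 ω)).1 h2)
        · exfalso
          apply hω.1
          simp [h1, h2]
    have hor : 0 < P (Xs 0 ⁻¹' O s) ∨ 0 < P (Xs 0 ⁻¹' O (fun k => ! s k)) := by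
      by_contra hcon
      push_neg at hcon
      have h1 := le_zero_iff.1 hcon.1
      have h2 := le_zero_iff.1 hcon.2
      have : P ((Xs 0 ⁻¹' O s) ∪ (Xs 0 ⁻¹' O (fun k => ! s k))) = 0 :=
        le_zero_iff.1 ((measure_union_le _ _).trans (by rw [h1, h2, add_zero]))
      have := measure_mono_null hsubE this
      rw [this] at hE
      exact lt_irrefl 0 hE
    rcases hor with hor | hor
    · have := (pos_part P (Xs 0) (Ys 0) (hXmeas 0) G hG hGrange hbern (O s)
        (inOrth_measurable s) hor).1
      refine lt_of_lt_of_le this (measure_mono ?_)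
      intro ω hω
      obtain ⟨hω1, hω2⟩ := hω
      show (if Ys 0 ω then Xs 0 ω else -(Xs 0 ω)) ∈ O s
      rw [hω2]
      simpa using hω1
    · have := (pos_part P (Xs 0) (Ys 0) (hXmeas 0) G hG hGrange hbern (O (fun k => ! s k))
        (inOrth_measurable _) hor).2
      refine lt_of_lt_of_le this (measure_mono ?_)
      intro ω hω
      obtain ⟨hω1, hω2⟩ := hω
      show (if Ys 0 ω then Xs 0 ω else -(Xs 0 ω)) ∈ O s
      rw [hω2]
      simp only [if_false, Bool.false_eq_true]
      exact (inOrth_neg_iff s (Xs 0 ω)).2 hω1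
  -- independence of the events
  have hAind : ∀ s, ProbabilityTheory.iIndepSet (A s) P := by
    intro s
    refine (ProbabilityTheory.iIndepSet_iff_meas_biInter (fun i => hAmeas s i)).2 ?_
    intro S
    exact hindep.measure_inter_preimage_eq_mul S (sets := fun _ => B s)
      (fun i _ => hBmeas s)
  -- Borel-Cantelli
  have hBC : ∀ s, P (Filter.limsup (A s) Filter.atTop) = 1 := by
    intro s
    refine ProbabilityTheory.measure_limsup_eq_one (fun i => hAmeas s i) (hAind s) ?_
    have : ∀ i : ℕ, P (A s i) = P (A s 0) := hAeq s
    calc (∑' i, P (A s i)) = ∑' _i : ℕ, P (A s 0) := by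
          exact tsum_congr this
      _ = ⊤ := ENNReal.tsum_const_eq_top_of_ne_zero (hApos s).ne'
  have hae : ∀ᵐ ω ∂P, ∀ s : Fin p → Bool, ∃ i : ℕ, ω ∈ A s i := by
    rw [ae_all_iff]
    intro s
    set U : Set Ω := ⋃ i, A s i with hU
    have hUmeas : MeasurableSet U := MeasurableSet.iUnion fun i => hAmeas s i
    have hsub : Filter.limsup (A s) Filter.atTop ⊆ U := by
      rw [Filter.limsup_eq_iInf_iSup_of_nat]
      intro ω hω
      simp only [iInf_eq_iInter, iSup_eq_iUnion, Set.mem_iInter, Set.mem_iUnion] at hω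
      obtain ⟨i, _, hi⟩ := hω 0
      exact Set.mem_iUnion.2 ⟨i, hi⟩
    have hPU : P U = 1 := le_antisymm prob_le_one (by rw [← hBC s]; exact measure_mono hsub)
    have hcompl : P Uᶜ = 0 := by
      rw [measure_compl hUmeas (measure_ne_top _ _), hPU, measure_univ, tsub_self]
    refine ae_iff.2 ?_
    convert hcompl using 2
    ext a
    simp [hU, Set.mem_iUnion]
  filter_upwards [hae] with ω hω
  choose ix hix using hω
  refine ⟨(Finset.univ.sup ix) + 1, fun n hn => ?_⟩
  have hcov : ∀ s : Fin p → Bool, ∃ i : Fin n,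
      inOrth s (fun k => if Ys i.1 ω then Xs i.1 ω k else -(Xs i.1 ω k)) := by
    intro s
    have hlt : ix s < n :=
      lt_of_lt_of_le (Nat.lt_succ_of_le (Finset.le_sup (Finset.mem_univ s))) hn
    refine ⟨⟨ix s, hlt⟩, ?_⟩
    have hmem := hix s
    have : (if Ys (ix s) ω then Xs (ix s) ω else -(Xs (ix s) ω)) ∈ O s := hmem
    by_cases hy : Ys (ix s) ω
    · simp only [hy, if_true] at this ⊢; exact this
    · simp only [hy, if_false, Bool.false_eq_true] at this ⊢
      exact this
  exact det_lemma hp (fun i : Fin n => Xs i.1 ω) (fun i : Fin n => Ys i.1 ω) hcov
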